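/- Every positive integer can be expressed uniquely as a sum of distinct non-consecutive Fibonacci numbers (Zeckendorf's theorem). -/

import Mathlib

open Finset

private lemma zeck_fib_pos (i : ℕ) : 0 < Nat.fib (i + 1) :=
  Nat.fib_pos.2 (Nat.succ_pos i)

private lemma zeck_lt_fib (n : ℕ) : n < Nat.fib (n + 2) := by
  induction n with
  | zero => decide
  | succ n ih =>
    have h1 : 0 < Nat.fib (n + 1) := zeck_fib_pos n
    have h2 : Nat.fib (n + 1 + 2) = Nat.fib (n + 1) + Nat.fib (n + 2) := Nat.fib_add_two
    omega

private lemma zeck_sum_lt : ∀ m : ℕ, ∀ S : Finset ℕ, (∀ i ∈ S, 1 ≤ i) →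
    (∀ i ∈ S, i + 1 ∉ S) → (∀ i ∈ S, i ≤ m) →
    ∑ i ∈ S, Nat.fib (i + 1) < Nat.fib (m + 2) := by
  intro m
  induction m using Nat.strong_induction_on with
  | _ m IH =>
    intro S h1 h2 hm
    rcases S.eq_empty_or_nonempty with rfl | hne
    · simp [zeck_fib_pos]
    · set M := S.max' hne with hMdef
      have hMS : M ∈ S := S.max'_mem hne
      have hM1 : 1 ≤ M := h1 _ hMS
      have hMm : M ≤ m := hm _ hMS
      have hsplit : ∑ i ∈ S, Nat.fib (i + 1)
          = Nat.fib (M + 1) + ∑ i ∈ S.erase M, Nat.fib (i + 1) :=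
        (Finset.add_sum_erase _ _ hMS).symm
      have herase_le : ∀ i ∈ S.erase M, i ≤ M - 2 := by
        intro i hi
        have hiS := Finset.mem_of_mem_erase hi
        have hiM : i ≠ M := Finset.ne_of_mem_erase hi
        have hle : i ≤ M := S.le_max' i hiS
        have hne' : i + 1 ≠ M := by
          intro h; exact h2 i hiS (h ▸ hMS)
        omega
      have hlt : ∑ i ∈ S.erase M, Nat.fib (i + 1) < Nat.fib (M - 2 + 2) := by
        refine IH (M - 2) (by omega) (S.erase M)
          (fun i hi => h1 i (Finset.mem_of_mem_erase hi))
          (fun i hi h => h2 i (Finset.mem_of_mem_erase hi) (Finset.mem_of_mem_erase h))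
          herase_le
      have hfibM : Nat.fib (M - 2 + 2) ≤ Nat.fib M := by
        rcases Nat.lt_or_ge M 2 with h | h
        · have : M = 1 := by omega
          rw [this]; decide
        · have : M - 2 + 2 = M := by omega
          rw [this]
      have hfib2 : Nat.fib (M + 2) = Nat.fib M + Nat.fib (M + 1) := Nat.fib_add_two
      have hmono : Nat.fib (M + 2) ≤ Nat.fib (m + 2) := Nat.fib_mono (by omega)
      omega

private lemma zeck_exists : ∀ n : ℕ, 0 < n → ∃ S : Finset ℕ,
    (∀ i ∈ S, 1 ≤ i) ∧ (∀ i ∈ S, i + 1 ∉ S) ∧ n = ∑ i ∈ S, Nat.fib (i + 1) := by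
  intro n
  induction n using Nat.strong_induction_on with
  | _ n IH =>
    intro hn
    set P : ℕ → Prop := fun k => Nat.fib (k + 1) ≤ n with hP
    have hP1 : P 1 := by simpa [hP] using (Nat.one_le_iff_ne_zero.mpr hn.ne')
    set k := Nat.findGreatest P n with hk
    have hk1 : 1 ≤ k := Nat.le_findGreatest hn hP1
    have hkP : P k := Nat.findGreatest_spec hn hP1
    have hkub : n < Nat.fib (k + 2) := by
      rcases Nat.lt_or_ge n (k + 1) with h | h
      · calc n < Nat.fib (n + 2) := zeck_lt_fib n
          _ ≤ Nat.fib (k + 2) := Nat.fib_mono (by omega)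
      · by_contra hcon
        exact Nat.findGreatest_is_greatest (Nat.lt_succ_self k) h (not_lt.1 hcon)
    have hfib2 : Nat.fib (k + 2) = Nat.fib k + Nat.fib (k + 1) := Nat.fib_add_two
    set r := n - Nat.fib (k + 1) with hr
    have hrlt : r < Nat.fib k := by omega
    rcases Nat.eq_zero_or_pos r with h0 | hpos
    · refine ⟨{k}, ?_, ?_, ?_⟩
      · intro i hi; simp at hi; omega
      · intro i hi; simp at hi; simp; omega
      · simp; omega
    · have hrn : r < n := by
        have := zeck_fib_pos k; omega
      obtain ⟨S', hS1, hS2, hS3⟩ := IH r hrn hpos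
      have hsmall : ∀ i ∈ S', i + 1 < k := by
        intro i hi
        have hle : Nat.fib (i + 1) ≤ r := by
          rw [hS3]
          exact Finset.single_le_sum (f := fun i => Nat.fib (i + 1)) (fun j _ => Nat.zero_le _) hi
        by_contra hcon
        have : Nat.fib k ≤ Nat.fib (i + 1) := Nat.fib_mono (by omega)
        omega
      have hknot : k ∉ S' := fun h => by have := hsmall k h; omega
      refine ⟨insert k S', ?_, ?_, ?_⟩
      · intro i hi
        rcases Finset.mem_insert.1 hi with rfl | hi'
        · exact hk1
        · exact hS1 i hi'
      · intro i hi
        rcases Finset.mem_insert.1 hi with rfl | hi'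
        · intro h
          rcases Finset.mem_insert.1 h with h' | h'
          · omega
          · have := hsmall _ h'; omega
        · intro h
          rcases Finset.mem_insert.1 h with h' | h'
          · have := hsmall _ hi'; omega
          · exact hS2 i hi' h'
      · rw [Finset.sum_insert hknot, ← hS3]; omega

private lemma zeck_uniq : ∀ n : ℕ, ∀ S T : Finset ℕ,
    (∀ i ∈ S, 1 ≤ i) → (∀ i ∈ S, i + 1 ∉ S) → n = ∑ i ∈ S, Nat.fib (i + 1) →
    (∀ i ∈ T, 1 ≤ i) → (∀ i ∈ T, i + 1 ∉ T) → n = ∑ i ∈ T, Nat.fib (i + 1) →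
    S = T := by
  intro n
  induction n using Nat.strong_induction_on with
  | _ n IH =>
    intro S T hS1 hS2 hS3 hT1 hT2 hT3
    rcases Nat.eq_zero_or_pos n with rfl | hn
    · have hSe : S = ∅ := by
        by_contra h
        obtain ⟨i, hi⟩ := Finset.nonempty_of_ne_empty h
        have : Nat.fib (i + 1) ≤ 0 := hS3 ▸ Finset.single_le_sum (f := fun i => Nat.fib (i + 1)) (fun j _ => Nat.zero_le _) hi
        have := zeck_fib_pos i; omega
      have hTe : T = ∅ := by
        by_contra h
        obtain ⟨i, hi⟩ := Finset.nonempty_of_ne_empty h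
        have : Nat.fib (i + 1) ≤ 0 := hT3 ▸ Finset.single_le_sum (f := fun i => Nat.fib (i + 1)) (fun j _ => Nat.zero_le _) hi
        have := zeck_fib_pos i; omega
      rw [hSe, hTe]
    · have hSne : S.Nonempty := by
        by_contra h
        rw [Finset.not_nonempty_iff_eq_empty] at h
        subst h; simp at hS3; omega
      have hTne : T.Nonempty := by
        by_contra h
        rw [Finset.not_nonempty_iff_eq_empty] at h
        subst h; simp at hT3; omega
      set M := S.max' hSne with hM
      set N := T.max' hTne with hN
      have hMS : M ∈ S := S.max'_mem hSne
      have hNT : N ∈ T := T.max'_mem hTne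
      have hMlb : Nat.fib (M + 1) ≤ n :=
        hS3 ▸ Finset.single_le_sum (f := fun i => Nat.fib (i + 1)) (fun j _ => Nat.zero_le _) hMS
      have hNlb : Nat.fib (N + 1) ≤ n :=
        hT3 ▸ Finset.single_le_sum (f := fun i => Nat.fib (i + 1)) (fun j _ => Nat.zero_le _) hNT
      have hMub : n < Nat.fib (M + 2) :=
        hS3 ▸ zeck_sum_lt M S hS1 hS2 (fun i hi => S.le_max' i hi)
      have hNub : n < Nat.fib (N + 2) :=
        hT3 ▸ zeck_sum_lt N T hT1 hT2 (fun i hi => T.le_max' i hi)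
      have hMN : M = N := by
        have h1 : M ≤ N := by
          by_contra h
          have : Nat.fib (M + 1) ≥ Nat.fib (N + 2) := Nat.fib_mono (by omega)
          omega
        have h2 : N ≤ M := by
          by_contra h
          have : Nat.fib (N + 1) ≥ Nat.fib (M + 2) := Nat.fib_mono (by omega)
          omega
        omega
      have hSsum : ∑ i ∈ S, Nat.fib (i + 1)
          = Nat.fib (M + 1) + ∑ i ∈ S.erase M, Nat.fib (i + 1) :=
        (Finset.add_sum_erase _ _ hMS).symm
      have hTsum : ∑ i ∈ T, Nat.fib (i + 1)
          = Nat.fib (M + 1) + ∑ i ∈ T.erase M, Nat.fib (i + 1) := by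
        rw [hMN]; exact (Finset.add_sum_erase _ _ hNT).symm
      have hlt : n - Nat.fib (M + 1) < n := by
        have := zeck_fib_pos M; omega
      have hEr : S.erase M = T.erase M := by
        refine IH (n - Nat.fib (M + 1)) hlt _ _
          (fun i hi => hS1 i (Finset.mem_of_mem_erase hi))
          (fun i hi h => hS2 i (Finset.mem_of_mem_erase hi) (Finset.mem_of_mem_erase h))
          (by omega)
          (fun i hi => hT1 i (Finset.mem_of_mem_erase hi))
          (fun i hi h => hT2 i (Finset.mem_of_mem_erase hi) (Finset.mem_of_mem_erase h))
          (by omega)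
      have : S = insert M (S.erase M) := (Finset.insert_erase hMS).symm
      rw [this, hEr, hMN] at *
      exact Finset.insert_erase hNT

/-- Zeckendorf's theorem: every positive integer is uniquely a sum of distinct
non-consecutive Fibonacci numbers `F_1 = 1, F_2 = 2, F_{n+2} = F_{n+1} + F_n`,
i.e. `F n = Nat.fib (n + 1)`. -/
theorem zeckendorf (n : ℕ) (hn : 0 < n) :
    ∃! S : Finset ℕ, (∀ i ∈ S, 1 ≤ i) ∧ (∀ i ∈ S, i + 1 ∉ S) ∧
      n = ∑ i ∈ S, Nat.fib (i + 1) := by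
  obtain ⟨S, h1, h2, h3⟩ := zeck_exists n hn
  refine ⟨S, ⟨h1, h2, h3⟩, ?_⟩
  rintro T ⟨hT1, hT2, hT3⟩
  exact zeck_uniq n T S hT1 hT2 hT3 h1 h2 h3
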